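/- Let N be a positive natural number, Ĝ ∈ ℝᴺˣᴺ a constant symmetric positive semi-definite matrix, S : ℝᴺ → ℝ continuously differentiable, and Δt > 0. If a⁰, a¹ ∈ ℝᴺ satisfy the Average Vector Field step a¹ − a⁰ = Δt · ∫₀¹ Ĝ ∇S((1−ξ) a⁰ + ξ a¹) dξ, then S(a¹) ≥ S(a⁰). (The AVF scheme with constant dissipation matrix satisfies the discrete dissipative law.) -/

import Mathlib

open Matrix

/-- If `Ĝ` is a constant symmetric positive semi-definite matrix, `S` is
continuously differentiable, `Δt > 0`, and `a⁰, a¹` satisfy the Average Vector Field step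
`a¹ − a⁰ = Δt ∫₀¹ Ĝ ∇S((1−ξ)a⁰ + ξa¹) dξ`, then `S(a¹) ≥ S(a⁰)`: the AVF scheme with constant
dissipation matrix satisfies the discrete dissipative law. -/
theorem stmt_15 (N : ℕ) (hN : 0 < N)
    (Gh : Matrix (Fin N) (Fin N) ℝ) (hGpsd : Gh.PosSemidef)
    (S : EuclideanSpace ℝ (Fin N) → ℝ) (hS : ContDiff ℝ 1 S)
    (Δt : ℝ) (hΔt : 0 < Δt) (a0 a1 : EuclideanSpace ℝ (Fin N))
    (hstep : a1 - a0 = Δt • ∫ ξ in (0:ℝ)..1,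
      (WithLp.toLp 2 (Gh.mulVec (gradient S ((1 - ξ) • a0 + ξ • a1) : EuclideanSpace ℝ (Fin N))) :
        EuclideanSpace ℝ (Fin N))) :
    S a0 ≤ S a1 := by
  set γ : ℝ → EuclideanSpace ℝ (Fin N) := fun t => (1 - t) • a0 + t • a1 with hγ
  set g : ℝ → EuclideanSpace ℝ (Fin N) := fun t => gradient S (γ t) with hg
  -- continuity of the gradient along the path
  have hγcont : Continuous γ := by fun_prop
  have hgradcont : Continuous (fun x : EuclideanSpace ℝ (Fin N) => gradient S x) := by
    have h1 : Continuous (fderiv ℝ S) := hS.continuous_fderiv one_ne_zero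
    exact (InnerProductSpace.toDual ℝ (EuclideanSpace ℝ (Fin N))).symm.continuous.comp h1
  have hgcont : Continuous g := hgradcont.comp hγcont
  -- derivative of S along the path
  have hderiv : ∀ t : ℝ, HasDerivAt (fun t => S (γ t)) (inner ℝ (g t) (a1 - a0) : ℝ) t := by
    intro t
    have hγd : HasDerivAt γ (a1 - a0) t := by
      have h := (((hasDerivAt_id t).const_sub 1).smul_const a0).add
        ((hasDerivAt_id t).smul_const a1)
      rw [show a1 - a0 = (-1:ℝ) • a0 + (1:ℝ) • a1 by rw [neg_one_smul, one_smul]; abel]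
      exact h
    have hF : HasFDerivAt S (fderiv ℝ S (γ t)) (γ t) :=
      (hS.differentiable one_ne_zero (γ t)).hasFDerivAt
    have h2 := hF.comp_hasDerivAt t hγd
    have heq : fderiv ℝ S (γ t) (a1 - a0) = (inner ℝ (g t) (a1 - a0) : ℝ) := by
      rw [hg]
      simp only [gradient]
      rw [InnerProductSpace.toDual_symm_apply]
    rwa [heq] at h2
  -- integrability
  have hint : IntervalIntegrable (fun t => (inner ℝ (g t) (a1 - a0) : ℝ))
      MeasureTheory.volume 0 1 :=
    (hgcont.inner continuous_const).intervalIntegrable 0 1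
  -- FTC
  have hFTC : S (γ 1) - S (γ 0) = ∫ t in (0:ℝ)..1, (inner ℝ (g t) (a1 - a0) : ℝ) := by
    rw [intervalIntegral.integral_eq_sub_of_hasDerivAt (fun t _ => hderiv t) hint]
  have hγ0 : γ 0 = a0 := by simp [hγ]
  have hγ1 : γ 1 = a1 := by simp [hγ]
  -- pull the inner product out of the integral
  have hgint : IntervalIntegrable g MeasureTheory.volume 0 1 :=
    hgcont.intervalIntegrable 0 1
  set I : EuclideanSpace ℝ (Fin N) := ∫ t in (0:ℝ)..1, g t with hI
  have hinner : (∫ t in (0:ℝ)..1, (inner ℝ (g t) (a1 - a0) : ℝ)) = inner ℝ I (a1 - a0) := by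
    have h := (innerSL ℝ (E := EuclideanSpace ℝ (Fin N)) (a1 - a0)).intervalIntegral_comp_comm
      hgint
    simp only [innerSL_apply_apply] at h
    calc (∫ t in (0:ℝ)..1, (inner ℝ (g t) (a1 - a0) : ℝ))
        = ∫ t in (0:ℝ)..1, (inner ℝ (a1 - a0) (g t) : ℝ) := by
          simp_rw [real_inner_comm]
      _ = inner ℝ (a1 - a0) I := h
      _ = inner ℝ I (a1 - a0) := real_inner_comm _ _
  have hgj : ∀ j : Fin N, Continuous (fun t : ℝ => g t j) := by
    intro j
    have h := (EuclideanSpace.proj (𝕜 := ℝ) j).continuous.comp hgcont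
    exact h
  have hIj : ∀ j : Fin N, I j = ∫ t in (0:ℝ)..1, g t j := by
    intro j
    have h := (EuclideanSpace.proj (𝕜 := ℝ) j).intervalIntegral_comp_comm hgint
    simpa using h.symm
  -- the matrix as a continuous linear map
  set M : EuclideanSpace ℝ (Fin N) →L[ℝ] EuclideanSpace ℝ (Fin N) :=
    LinearMap.toContinuousLinearMap
    { toFun := fun x : EuclideanSpace ℝ (Fin N) => WithLp.toLp 2 (Gh.mulVec x.ofLp),
      map_add' := fun x y => by
        ext i
        simp [Matrix.mulVec, dotProduct, mul_add, Finset.sum_add_distrib],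
      map_smul' := fun c x => by
        ext i
        simp [Matrix.mulVec, dotProduct, Finset.mul_sum, mul_comm, mul_left_comm] } with hM
  have hMapply : ∀ x : EuclideanSpace ℝ (Fin N), M x = WithLp.toLp 2 (Gh.mulVec x.ofLp) :=
    fun x => rfl
  have hstep' : a1 - a0 = Δt • M I := by
    rw [hstep, hI, ← M.intervalIntegral_comp_comm hgint]
    rfl
  have hpsd : (0:ℝ) ≤ inner ℝ I (M I) := by
    have h := hGpsd.dotProduct_mulVec_nonneg I.ofLp
    simpa [hMapply, PiLp.inner_apply, dotProduct, RCLike.inner_apply,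
      mul_comm] using h
  have key : S a1 - S a0 = Δt * inner ℝ I (M I) := by
    rw [← hγ0, ← hγ1, hFTC, hinner, hstep', real_inner_smul_right]
  nlinarith [key, mul_nonneg hΔt.le hpsd]
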